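/- arXiv:1110.4093 — 3 statements merged into one kernel-verified Lean document; each statement's English description precedes it below -/
import Mathlib

section
/- Let u, v be elements of ℤ² and let t_u, t_v ∈ SL(2,ℤ) be the corresponding symplectic transvections, t_w : x ↦ x + (w ∧ x)·w where ∧ is the standard symplectic form with (1,0) ∧ (0,1) = 1. Then t_u and t_v generate SL(2,ℤ) if and only if u and v span ℤ² (form a ℤ-basis). -/
abbrev SL2Z := Matrix.SpecialLinearGroup (Fin 2) ℤ

/-- The standard symplectic form on `ℤ²` with `(1,0) ∧ (0,1) = 1`. -/
def symp (u v : Fin 2 → ℤ) : ℤ := u 0 * v 1 - u 1 * v 0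

/-- The symplectic transvection (Dehn twist) `t_w : x ↦ x + (w ∧ x)·w`, as an
element of `SL(2,ℤ)` acting on row vectors by right multiplication. -/
def twist (w : Fin 2 → ℤ) : SL2Z :=
  ⟨!![1 - w 0 * w 1, -(w 1) ^ 2; (w 0) ^ 2, 1 + w 0 * w 1], by
    simp [Matrix.det_fin_two_of]; ring⟩

/-- The transvection `twist w` indeed acts on row vectors by `x ↦ x + (w ∧ x)·w`. -/
theorem twist_vecMul (w x : Fin 2 → ℤ) :
    Matrix.vecMul x (twist w : Matrix (Fin 2) (Fin 2) ℤ) = x + symp w x • w := by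
  funext i
  fin_cases i <;>
    simp [twist, symp, Matrix.vecMul, dotProduct, Fin.sum_univ_two] <;> ring

def Lm (n : ℤ) : SL2Z := ⟨!![1, 0; n, 1], by simp [Matrix.det_fin_two_of]⟩
def Um (n : ℤ) : SL2Z := ⟨!![1, n; 0, 1], by simp [Matrix.det_fin_two_of]⟩
def Sm : SL2Z := ⟨!![0, 1; -1, 0], by norm_num [Matrix.det_fin_two_of]⟩
def Nm : SL2Z := ⟨!![-1, 0; 0, -1], by norm_num [Matrix.det_fin_two_of]⟩

lemma Lm_mul (m n : ℤ) : Lm m * Lm n = Lm (m + n) := by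
  apply Subtype.ext
  rw [Matrix.SpecialLinearGroup.coe_mul]; simp [Lm, Matrix.mul_fin_two]
  try ring_nf
  try rw [add_comm]

lemma Um_mul (m n : ℤ) : Um m * Um n = Um (m + n) := by
  apply Subtype.ext
  rw [Matrix.SpecialLinearGroup.coe_mul]; simp [Um, Matrix.mul_fin_two]
  try ring_nf
  try rw [add_comm]

lemma Lm_zero : Lm 0 = 1 := by apply Subtype.ext; simp [Lm]; exact (Matrix.eta_fin_two 1).symm.trans (by norm_num)

lemma twist_e0 : twist ![1, 0] = Lm 1 := by
  apply Subtype.ext; simp [twist, Lm]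

lemma twist_e1 : twist ![0, 1] = Um (-1) := by
  apply Subtype.ext; simp [twist, Um]

lemma Um_zero : Um 0 = 1 := by
  apply Subtype.ext; simp [Um]; exact (Matrix.eta_fin_two 1).symm.trans (by norm_num)

def Hgen : Subgroup SL2Z := Subgroup.closure {twist ![1, 0], twist ![0, 1]}

lemma fam_mem {K : Subgroup SL2Z} (f : ℤ → SL2Z)
    (hf : ∀ m n, f m * f n = f (m + n)) (h0 : f 0 = 1) (h1 : f 1 ∈ K) :
    ∀ n : ℤ, f n ∈ K := by
  have hneg : f (-1) = (f 1)⁻¹ := by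
    apply eq_inv_of_mul_eq_one_right
    rw [hf]; norm_num [h0]
  intro n
  induction n using Int.induction_on with
  | zero => rw [h0]; exact one_mem K
  | succ k ih => rw [← hf]; exact mul_mem ih h1
  | pred k ih =>
      have : f (-(k:ℤ) - 1) = f (-(k:ℤ)) * f (-1) := by rw [hf]; ring_nf
      rw [this, hneg]; exact mul_mem ih (inv_mem h1)

lemma Lm_mem (n : ℤ) : Lm n ∈ Hgen := by
  refine fam_mem Lm Lm_mul Lm_zero ?_ n
  rw [← twist_e0]; exact Subgroup.subset_closure (by simp)

lemma Um_mem (n : ℤ) : Um n ∈ Hgen := by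
  refine fam_mem Um Um_mul Um_zero ?_ n
  have : Um (-1) ∈ Hgen := by
    rw [← twist_e1]; exact Subgroup.subset_closure (by simp)
  have h := inv_mem this
  have e : (Um (-1))⁻¹ = Um 1 := by
    symm; apply eq_inv_of_mul_eq_one_right; rw [Um_mul]; norm_num [Um_zero]
  rwa [e] at h

lemma Sm_eq : Sm = Um 1 * Lm (-1) * Um 1 := by
  apply Subtype.ext
  rw [Matrix.SpecialLinearGroup.coe_mul, Matrix.SpecialLinearGroup.coe_mul]; simp [Sm, Um, Lm, Matrix.mul_fin_two]

lemma Sm_mem : Sm ∈ Hgen := by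
  rw [Sm_eq]; exact mul_mem (mul_mem (Um_mem 1) (Lm_mem (-1))) (Um_mem 1)

lemma Nm_eq : Nm = Sm * Sm := by
  apply Subtype.ext; rw [Matrix.SpecialLinearGroup.coe_mul]; simp [Sm, Nm, Matrix.mul_fin_two]

lemma Nm_mem : Nm ∈ Hgen := by rw [Nm_eq]; exact mul_mem Sm_mem Sm_mem

lemma mul_Lm_00 (g : SL2Z) (m : ℤ) :
    (g * Lm m).1 0 0 = g.1 0 0 + g.1 0 1 * m := by
  rw [Matrix.SpecialLinearGroup.coe_mul]; simp [Lm, Matrix.SpecialLinearGroup.coe_mul, Matrix.mul_apply, Fin.sum_univ_two]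

lemma mul_Lm_01 (g : SL2Z) (m : ℤ) :
    (g * Lm m).1 0 1 = g.1 0 1 := by
  rw [Matrix.SpecialLinearGroup.coe_mul]; simp [Lm, Matrix.SpecialLinearGroup.coe_mul, Matrix.mul_apply, Fin.sum_univ_two]

lemma mul_Um_00 (g : SL2Z) (m : ℤ) :
    (g * Um m).1 0 0 = g.1 0 0 := by
  rw [Matrix.SpecialLinearGroup.coe_mul]; simp [Um, Matrix.SpecialLinearGroup.coe_mul, Matrix.mul_apply, Fin.sum_univ_two]

lemma mul_Um_01 (g : SL2Z) (m : ℤ) :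
    (g * Um m).1 0 1 = g.1 0 0 * m + g.1 0 1 := by
  rw [Matrix.SpecialLinearGroup.coe_mul]; simp [Um, Matrix.SpecialLinearGroup.coe_mul, Matrix.mul_apply, Fin.sum_univ_two]

lemma det_entries (g : SL2Z) : g.1 0 0 * g.1 1 1 - g.1 0 1 * g.1 1 0 = 1 := by
  have := g.2; rwa [Matrix.det_fin_two] at this

lemma reduce : ∀ n : ℕ, ∀ g : SL2Z, (g.1 0 0).natAbs + (g.1 0 1).natAbs ≤ n → g ∈ Hgen := by
  intro n
  induction n with
  | zero =>
      intro g hg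
      exfalso
      have hdet := det_entries g
      have ha : g.1 0 0 = 0 := by omega
      have hb : g.1 0 1 = 0 := by omega
      rw [ha, hb] at hdet; simp at hdet
  | succ n ih =>
      intro g hg
      have hdet := det_entries g
      by_cases hb : g.1 0 1 = 0
      · have had : g.1 0 0 * g.1 1 1 = 1 := by rw [hb] at hdet; linarith
        rcases Int.eq_one_or_neg_one_of_mul_eq_one' had with ⟨ha, hd⟩ | ⟨ha, hd⟩
        · have he : g = Lm (g.1 1 0) := by
            apply Subtype.ext
            conv_lhs => rw [Matrix.eta_fin_two g.1]
            rw [ha, hb, hd]; simp [Lm]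
          rw [he]; exact Lm_mem _
        · have he : g = Nm * Lm (-(g.1 1 0)) := by
            apply Subtype.ext
            conv_lhs => rw [Matrix.eta_fin_two g.1]
            rw [ha, hb, hd, Matrix.SpecialLinearGroup.coe_mul]; simp [Nm, Lm, Matrix.mul_fin_two]
          rw [he]; exact mul_mem Nm_mem (Lm_mem _)
      · by_cases ha : g.1 0 0 = 0
        · have hbc : g.1 0 1 * (-(g.1 1 0)) = 1 := by rw [ha] at hdet; linarith
          rcases Int.eq_one_or_neg_one_of_mul_eq_one' hbc with ⟨hb1, hc⟩ | ⟨hb1, hc⟩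
          · have hc' : g.1 1 0 = -1 := by omega
            have he : g = Lm (g.1 1 1) * Sm := by
              apply Subtype.ext
              conv_lhs => rw [Matrix.eta_fin_two g.1]
              rw [ha, hb1, hc', Matrix.SpecialLinearGroup.coe_mul]; simp [Lm, Sm, Matrix.mul_fin_two]
            rw [he]; exact mul_mem (Lm_mem _) Sm_mem
          · have hc' : g.1 1 0 = 1 := by omega
            have he : g = Nm * Lm (-(g.1 1 1)) * Sm := by
              apply Subtype.ext
              conv_lhs => rw [Matrix.eta_fin_two g.1]
              rw [ha, hb1, hc', Matrix.SpecialLinearGroup.coe_mul, Matrix.SpecialLinearGroup.coe_mul]; simp [Nm, Lm, Sm, Matrix.mul_fin_two]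
            rw [he]; exact mul_mem (mul_mem Nm_mem (Lm_mem _)) Sm_mem
        · rcases le_or_gt (g.1 0 1).natAbs (g.1 0 0).natAbs with hab | hab
          · set q := g.1 0 0 / g.1 0 1 with hq
            have h00 : (g * Lm (-q)).1 0 0 = g.1 0 0 % g.1 0 1 := by
              rw [mul_Lm_00, Int.emod_def, hq]; ring
            have h01 : (g * Lm (-q)).1 0 1 = g.1 0 1 := mul_Lm_01 g _
            have hlt : (g.1 0 0 % g.1 0 1).natAbs < (g.1 0 1).natAbs := by
              have h1 := Int.emod_nonneg (g.1 0 0) hb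
              have h2 := Int.emod_lt_abs (g.1 0 0) hb
              rw [Int.abs_eq_natAbs] at h2
              omega
            have hmem : g * Lm (-q) ∈ Hgen := by
              apply ih
              rw [h00, h01]; omega
            have he : g = (g * Lm (-q)) * Lm q := by
              rw [mul_assoc, Lm_mul]; norm_num [Lm_zero]
            rw [he]; exact mul_mem hmem (Lm_mem q)
          · set q := g.1 0 1 / g.1 0 0 with hq
            have h01 : (g * Um (-q)).1 0 1 = g.1 0 1 % g.1 0 0 := by
              rw [mul_Um_01, Int.emod_def, hq]; ring
            have h00 : (g * Um (-q)).1 0 0 = g.1 0 0 := mul_Um_00 g _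
            have hlt : (g.1 0 1 % g.1 0 0).natAbs < (g.1 0 0).natAbs := by
              have h1 := Int.emod_nonneg (g.1 0 1) ha
              have h2 := Int.emod_lt_abs (g.1 0 1) ha
              rw [Int.abs_eq_natAbs] at h2
              omega
            have hmem : g * Um (-q) ∈ Hgen := by
              apply ih
              rw [h00, h01]; omega
            have he : g = (g * Um (-q)) * Um q := by
              rw [mul_assoc, Um_mul]; norm_num [Um_zero]
            rw [he]; exact mul_mem hmem (Um_mem q)

lemma Hgen_top : Hgen = ⊤ := by
  rw [eq_top_iff]
  intro g _
  exact reduce _ g le_rfl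

lemma twist_conj (w : Fin 2 → ℤ) (g : SL2Z) :
    twist (Matrix.vecMul w g.1) = g⁻¹ * twist w * g := by
  have key : g * twist (Matrix.vecMul w g.1) = twist w * g := by
    apply Subtype.ext
    have hdet := det_entries g
    show g.1 * _ = _ * g.1
    conv_lhs => rw [Matrix.eta_fin_two g.1]
    conv_rhs => rw [Matrix.eta_fin_two g.1]
    ext i j
    fin_cases i <;> fin_cases j <;>
      simp [twist, Matrix.mul_fin_two, Matrix.vecMul, dotProduct,
        Fin.sum_univ_two]
    · linear_combination (-(w 0 * g.1 0 0 + w 1 * g.1 1 0) * w 1) * hdet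
    · linear_combination (-(w 0 * g.1 0 1 + w 1 * g.1 1 1) * w 1) * hdet
    · linear_combination ((w 0 * g.1 0 0 + w 1 * g.1 1 0) * w 0) * hdet
    · linear_combination ((w 0 * g.1 0 1 + w 1 * g.1 1 1) * w 0) * hdet
  have := congrArg (fun x => g⁻¹ * x) key
  simpa [← mul_assoc] using this

lemma gen_of_symp_one (u v : Fin 2 → ℤ) (h : symp u v = 1) :
    Subgroup.closure {twist u, twist v} = (⊤ : Subgroup SL2Z) := by
  have hdet : Matrix.det !![u 0, u 1; v 0, v 1] = 1 := by
    rw [Matrix.det_fin_two_of]; simpa [symp] using h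
  set g : SL2Z := ⟨!![u 0, u 1; v 0, v 1], hdet⟩ with hg
  have hu : Matrix.vecMul ![1, 0] g.1 = u := by
    funext j
    fin_cases j <;> simp [hg, Matrix.vecMul, dotProduct, Fin.sum_univ_two]
  have hv : Matrix.vecMul ![0, 1] g.1 = v := by
    funext j
    fin_cases j <;> simp [hg, Matrix.vecMul, dotProduct, Fin.sum_univ_two]
  have htu : twist u = (MulAut.conj g⁻¹) (twist ![1, 0]) := by
    rw [← hu, twist_conj]; simp [MulAut.conj, mul_assoc]
  have htv : twist v = (MulAut.conj g⁻¹) (twist ![0, 1]) := by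
    rw [← hv, twist_conj]; simp [MulAut.conj, mul_assoc]
  have hset : ({twist u, twist v} : Set SL2Z)
      = (MulAut.conj g⁻¹) '' {twist ![1, 0], twist ![0, 1]} := by
    rw [Set.image_pair, ← htu, ← htv]
  rw [hset, show ⇑(MulAut.conj g⁻¹) = ⇑(MulAut.conj g⁻¹).toMonoidHom from rfl,
    ← MonoidHom.map_closure]
  have : Subgroup.closure {twist ![1, 0], twist ![0, 1]} = ⊤ := Hgen_top
  rw [this]
  exact Subgroup.map_top_of_surjective _ (MulAut.conj g⁻¹).surjective

lemma span_of_gen (u v : Fin 2 → ℤ)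
    (h : Subgroup.closure {twist u, twist v} = (⊤ : Subgroup SL2Z)) :
    Submodule.span ℤ ({u, v} : Set (Fin 2 → ℤ)) = ⊤ := by
  set M := Submodule.span ℤ ({u, v} : Set (Fin 2 → ℤ)) with hM
  set K : Subgroup SL2Z :=
    { carrier := {g : SL2Z | ∀ x : Fin 2 → ℤ, Matrix.vecMul x g.1 - x ∈ M}
      one_mem' := by intro x; simp
      mul_mem' := by
        intro a b ha hb x
        have e : Matrix.vecMul x (a * b).1 - x
            = (Matrix.vecMul (Matrix.vecMul x a.1) b.1 - Matrix.vecMul x a.1)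
              + (Matrix.vecMul x a.1 - x) := by
          rw [Matrix.SpecialLinearGroup.coe_mul, ← Matrix.vecMul_vecMul]; abel
        rw [e]; exact add_mem (hb _) (ha _)
      inv_mem' := by
        intro a ha x
        have hx : Matrix.vecMul (Matrix.vecMul x a⁻¹.1) a.1 = x := by
          rw [Matrix.vecMul_vecMul, ← Matrix.SpecialLinearGroup.coe_mul,
            inv_mul_cancel]
          simp
        have e : Matrix.vecMul x a⁻¹.1 - x
            = -(Matrix.vecMul (Matrix.vecMul x a⁻¹.1) a.1
                - Matrix.vecMul x a⁻¹.1) := by rw [hx]; abel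
        rw [e]; exact neg_mem (ha _) } with hK
  have hsub : ({twist u, twist v} : Set SL2Z) ⊆ K := by
    intro t ht
    rcases ht with rfl | rfl <;> intro x <;> rw [twist_vecMul]
    · have e : x + symp u x • u - x = symp u x • u := by abel
      rw [e]; exact Submodule.smul_mem M _ (Submodule.subset_span (by simp))
    · have e : x + symp v x • v - x = symp v x • v := by abel
      rw [e]; exact Submodule.smul_mem M _ (Submodule.subset_span (by simp))
  have hK' : ∀ g : SL2Z, g ∈ K := by
    intro g
    have hle := (Subgroup.closure_le K).2 hsub
    rw [h] at hle
    exact hle (Subgroup.mem_top g)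
  have h1 : (![1, 0] : Fin 2 → ℤ) ∈ M := by
    have hx := hK' (Lm 1) ![0, 1]
    have e : Matrix.vecMul ![0, 1] (Lm 1).1 - ![0, 1] = ![1, 0] := by
      funext j
      fin_cases j <;>
        simp [Lm, Matrix.vecMul, dotProduct, Fin.sum_univ_two]
    rwa [e] at hx
  have h2 : (![0, 1] : Fin 2 → ℤ) ∈ M := by
    have hx := hK' (Um 1) ![1, 0]
    have e : Matrix.vecMul ![1, 0] (Um 1).1 - ![1, 0] = ![0, 1] := by
      funext j
      fin_cases j <;>
        simp [Um, Matrix.vecMul, dotProduct, Fin.sum_univ_two]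
    rwa [e] at hx
  rw [eq_top_iff]
  intro x _
  have e : x = x 0 • ![(1 : ℤ), 0] + x 1 • ![0, 1] := by
    funext j; fin_cases j <;> simp
  rw [hM, e]
  exact add_mem (Submodule.smul_mem _ _ h1) (Submodule.smul_mem _ _ h2)

/-- `t_u` and `t_v` generate `SL(2,ℤ)` if and only if `u` and `v` span `ℤ²`. -/
theorem twists_generate_iff_span (u v : Fin 2 → ℤ) :
    Subgroup.closure {twist u, twist v} = (⊤ : Subgroup SL2Z) ↔
      Submodule.span ℤ ({u, v} : Set (Fin 2 → ℤ)) = ⊤ := by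
  constructor
  · exact span_of_gen u v
  · intro hspan
    have h1 : (![1, 0] : Fin 2 → ℤ) ∈ Submodule.span ℤ ({u, v} : Set (Fin 2 → ℤ)) := by
      rw [hspan]; trivial
    have h2 : (![0, 1] : Fin 2 → ℤ) ∈ Submodule.span ℤ ({u, v} : Set (Fin 2 → ℤ)) := by
      rw [hspan]; trivial
    rw [Submodule.mem_span_pair] at h1 h2
    obtain ⟨a, b, hab⟩ := h1
    obtain ⟨c, d, hcd⟩ := h2
    have hab0 := congrFun hab 0
    have hab1 := congrFun hab 1
    have hcd0 := congrFun hcd 0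
    have hcd1 := congrFun hcd 1
    simp [Pi.add_apply, Pi.smul_apply, smul_eq_mul] at hab0 hab1 hcd0 hcd1
    have key : symp u v * (a * d - b * c) = 1 := by
      have expand : (u 0 * v 1 - u 1 * v 0) * (a * d - b * c)
          = (a * u 0 + b * v 0) * (c * u 1 + d * v 1)
            - (a * u 1 + b * v 1) * (c * u 0 + d * v 0) := by ring
      rw [symp, expand, hab0, hab1, hcd0, hcd1]; ring
    rcases Int.eq_one_or_neg_one_of_mul_eq_one key with hs | hs
    · exact gen_of_symp_one u v hs
    · rw [Set.pair_comm (twist u) (twist v)]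
      apply gen_of_symp_one v u
      simp [symp] at hs ⊢; linarith
end

section
/- Let G = ⟨α, β⟩ be a free group of rank 2 on generators α and β. Suppose α', β' ∈ G generate G and each of α', β' is conjugate in G to α or to β. Then the pair (α', β') can be transformed into (α, β) by a finite sequence of Hurwitz moves and a global conjugation; that is, there exists g ∈ G such that (g⁻¹α'g, g⁻¹β'g) is obtained from (α, β) by a sequence of moves of the form (a,b) ↦ (aba⁻¹, a) and their inverses. -/
open FreeGroup


/-- The Hurwitz move on a pair: `(a, b) ↦ (aba⁻¹, a)`. -/
def hurwitz {G : Type*} [Group G] (p : G × G) : G × G :=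
  (p.1 * p.2 * p.1⁻¹, p.1)

/-- One step of Hurwitz equivalence: a Hurwitz move or its inverse. -/
def hurwitzStep {G : Type*} [Group G] (p q : G × G) : Prop :=
  q = hurwitz p ∨ p = hurwitz q

/-- Extend a partial injection on a fintype to a permutation. -/
lemma exists_perm_extend {V : Type*} [Fintype V] [DecidableEq V] (f : V → Option V)
    (hinj : ∀ x y z, f x = some z → f y = some z → x = y) :
    ∃ σ : Equiv.Perm V, ∀ x y, f x = some y → σ x = y := by
  classical
  have hbij : Function.Bijective
      (fun x : {v // (f v).isSome} =>
        (⟨(f x.1).get x.2, ⟨x.1, Option.eq_some_of_isSome x.2⟩⟩ :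
          {v // ∃ x, f x = some v})) := by
    constructor
    · rintro ⟨x, hx⟩ ⟨y, hy⟩ h
      simp only [Subtype.mk.injEq] at h
      refine Subtype.ext (hinj x y _ (Option.eq_some_of_isSome hx) ?_)
      rw [h]; exact Option.eq_some_of_isSome hy
    · rintro ⟨v, x, hx⟩
      exact ⟨⟨x, by simp [hx]⟩, by simp [hx]⟩
  let e := Equiv.ofBijective _ hbij
  refine ⟨e.extendSubtype, fun x y hxy => ?_⟩
  have hx : (f x).isSome := by simp [hxy]
  rw [Equiv.extendSubtype_apply_of_mem e x hx]
  have : ((e ⟨x, hx⟩ : {v // ∃ x, f x = some v}) : V) = (f x).get hx := rfl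
  rw [this]
  simp [hxy]

open FreeGroup

/-- A word has no adjacent cancelling pair. -/
def NoCancel {α : Type*} (L : List (α × Bool)) : Prop :=
  ∀ j (x : α) (s : Bool), L[j]? = some (x, s) → L[(j + 1)]? ≠ some (x, !s)

lemma noCancel_tail {α : Type*} {p} {L : List (α × Bool)} (h : NoCancel (p :: L)) :
    NoCancel L := fun j x s h1 h2 => h (j + 1) x s (by simpa using h1) (by simpa using h2)

lemma noCancel_take {α : Type*} {L : List (α × Bool)} (h : NoCancel L) (k : ℕ) :
    NoCancel (L.take k) := by
  intro j x s h1 h2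
  rw [List.getElem?_take_of_lt] at h1 h2
  · exact h j x s h1 h2
  · exact (List.getElem?_eq_some_iff.mp h2).fst.trans_le (by simp [List.length_take]) |>.trans_le le_rfl
  · exact (List.getElem?_eq_some_iff.mp h1).fst.trans_le (by simp)

lemma noCancel_toWord {α : Type*} [DecidableEq α] (w : FreeGroup α) : NoCancel w.toWord := by
  intro j x s h1 h2
  have hj1 : j < w.toWord.length := (List.getElem?_eq_some_iff.mp h1).fst
  have hj2 : j + 1 < w.toWord.length := (List.getElem?_eq_some_iff.mp h2).fst
  have e1 : w.toWord[j] = (x, s) :=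
    Option.some_injective _ ((List.getElem?_eq_getElem hj1).symm.trans h1)
  have e2 : w.toWord[j + 1] = (x, !s) :=
    Option.some_injective _ ((List.getElem?_eq_getElem hj2).symm.trans h2)
  have hsplit : w.toWord = w.toWord.take j ++ (x, s) :: (x, !s) :: w.toWord.drop (j + 2) := by
    conv_lhs => rw [← List.take_append_drop j w.toWord,
      List.drop_eq_getElem_cons hj1, e1, List.drop_eq_getElem_cons hj2, e2]
  exact FreeGroup.reduce.not ((FreeGroup.reduce_toWord w).trans hsplit)

lemma noCancel_reduce_eq {α : Type*} [DecidableEq α] :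
    ∀ {L : List (α × Bool)}, NoCancel L → FreeGroup.reduce L = L := by
  intro L
  induction L with
  | nil => intro _; rfl
  | cons p t ih =>
    intro h
    have ht := ih (noCancel_tail h)
    rcases p with ⟨x, s⟩
    rw [FreeGroup.reduce.cons, ht]
    cases t with
    | nil => rfl
    | cons q t' =>
      have hq : ¬(x = q.1 ∧ s = !q.2) := by
        rintro ⟨h1, h2⟩
        exact h 0 x s rfl (by simp [show q = (x, !s) from Prod.ext h1.symm (by simp [h2])])
      simp [hq]

lemma toWord_mk_of_noCancel {α : Type*} [DecidableEq α] {L : List (α × Bool)}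
    (h : NoCancel L) : (FreeGroup.mk L).toWord = L := by
  rw [FreeGroup.toWord_mk, noCancel_reduce_eq h]


/-- The partial Stallings-graph action of generator `g` on vertices `0..L.length`,
with a loop at vertex `m`. -/
def pfun (L : List (Fin 2 × Bool)) (g : Fin 2) (m : ℕ) (v : Fin (L.length + 1)) :
    Option (Fin (L.length + 1)) :=
  if h : L[v.val]? = some (g, false) then
    some ⟨v.val + 1, by have := (List.getElem?_eq_some_iff.mp h).fst; omega⟩
  else if 0 < v.val ∧ L[(v.val - 1)]? = some (g, true) then
    some ⟨v.val - 1, by have := v.isLt; omega⟩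
  else if v.val = m then some v else none

variable {L : List (Fin 2 × Bool)} {g : Fin 2} {m : ℕ}

lemma pfun_cases {v z : Fin (L.length + 1)} (h : pfun L g m v = some z) :
    (L[v.val]? = some (g, false) ∧ z.val = v.val + 1) ∨
    (0 < v.val ∧ L[(v.val - 1)]? = some (g, true) ∧ z.val = v.val - 1) ∨
    (v.val = m ∧ z = v) := by
  unfold pfun at h
  split_ifs at h with h1 h2 h3
  · exact Or.inl ⟨h1, by cases h; rfl⟩
  · exact Or.inr (Or.inl ⟨h2.1, h2.2, by cases h; rfl⟩)
  · exact Or.inr (Or.inr ⟨h3, by cases h; rfl⟩)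

lemma pfun_false {j : ℕ} (hj : j < L.length) (hg : L[j]? = some (g, false))
    (h1 : j < L.length + 1) (h2 : j + 1 < L.length + 1) :
    pfun L g m ⟨j, h1⟩ = some ⟨j + 1, h2⟩ := by
  unfold pfun
  rw [dif_pos hg]

lemma pfun_true (hNC : NoCancel L) {j : ℕ} (hg : L[j]? = some (g, true))
    (h1 : j + 1 < L.length + 1) (h2 : j < L.length + 1) :
    pfun L g m ⟨j + 1, h1⟩ = some ⟨j, h2⟩ := by
  have hb1 : ¬ L[(j + 1)]? = some (g, false) := by
    have := hNC j g true hg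
    simpa using this
  unfold pfun
  rw [dif_neg hb1, if_pos ⟨Nat.succ_pos j, by simpa using hg⟩]
  exact congrArg some (Fin.ext (by simp))

lemma pfun_loop (hA : ∀ s, L[m]? ≠ some (g, s))
    (hB : 0 < m → ∀ s, L[(m - 1)]? ≠ some (g, s)) (hm : m < L.length + 1) :
    pfun L g m ⟨m, hm⟩ = some ⟨m, hm⟩ := by
  unfold pfun
  rw [dif_neg (hA false), if_neg, if_pos rfl]
  rintro ⟨hpos, hget⟩
  exact hB hpos true hget

lemma pfun_inj (hNC : NoCancel L) (hA : ∀ s, L[m]? ≠ some (g, s))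
    (hB : 0 < m → ∀ s, L[(m - 1)]? ≠ some (g, s)) :
    ∀ x y z, pfun L g m x = some z → pfun L g m y = some z → x = y := by
  have key : ∀ x y z, pfun L g m x = some z → pfun L g m y = some z →
      x.val ≤ y.val → x = y := by
    intro x y z hx hy hxy
    rcases pfun_cases hx with ⟨hg1, hz1⟩ | ⟨hp1, hg1, hz1⟩ | ⟨hm1, hz1⟩ <;>
      rcases pfun_cases hy with ⟨hg2, hz2⟩ | ⟨hp2, hg2, hz2⟩ | ⟨hm2, hz2⟩
    · exact Fin.ext (by omega)
    · -- x+1 = y-1 : letters (g,false) at x, (g,true) at y-1 = x+1 : cancelling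
      exfalso
      have hyx : y.val - 1 = x.val + 1 := by omega
      rw [hyx] at hg2
      exact hNC x.val g false hg1 (by simpa using hg2)
    · -- z = y, y = m, z = x+1 : so m = x+1, letter (g,false) at x = m-1
      exfalso
      subst hz2
      exact hB (by omega) false (by
        have : m - 1 = x.val := by omega
        rw [this]; exact hg1)
    · exfalso
      have : x.val - 1 = y.val ∨ x.val = y.val + 1 + 1 - 1 := Or.inl (by omega)
      have hxy' : x.val - 1 = y.val + 1 + 1 - 1 := by omega
      -- y+1 = x-1 : (g,false) at y, (g,true) at x-1 = y+1 : cancelling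
      have h' : x.val - 1 = y.val + 1 := by omega
      rw [h'] at hg1
      exact hNC y.val g false hg2 (by simpa using hg1)
    · exact Fin.ext (by omega)
    · exfalso
      subst hz2
      have : x.val - 1 = m := by omega
      rw [this] at hg1
      exact hA true hg1
    · exfalso
      subst hz1
      exact hB (by omega) false (by
        have : m - 1 = y.val := by omega
        rw [this]; exact hg2)
    · exfalso
      subst hz1
      have : y.val - 1 = m := by omega
      rw [this] at hg2
      exact hA true hg2
    · exact hz1.symm.trans hz2
  intro x y z hx hy
  rcases le_total x.val y.val with h | h
  · exact key x y z hx hy h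
  · exact (key y x z hy hx h).symm

lemma inv_of_eq_mk {α : Type*} (x : α) : (FreeGroup.of x)⁻¹ = FreeGroup.mk [(x, false)] := by
  rw [show FreeGroup.of x = FreeGroup.mk [(x, true)] from rfl, FreeGroup.inv_mk]; rfl

/-- Key lemma: if the reduced word of `w` starts with a `β`-letter and ends with an
`α`-letter, then `β ∉ ⟨α, wβw⁻¹⟩`. -/
lemma key_lemma (w : FreeGroup (Fin 2)) (s t : Bool)
    (hh : w.toWord[0]? = some (1, s))
    (hl : w.toWord[(w.toWord.length - 1)]? = some (0, t)) :
    FreeGroup.of 1 ∉ Subgroup.closure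
      {FreeGroup.of 0, w * FreeGroup.of 1 * w⁻¹} := by
  classical
  set L := w.toWord with hL
  have hNC : NoCancel L := noCancel_toWord w
  have hn : 0 < L.length := (List.getElem?_eq_some_iff.mp hh).fst
  set n := L.length with hnn
  -- the two permutations
  have hAσ : ∀ s', L[0]? ≠ some ((0 : Fin 2), s') := by
    intro s' hc
    rw [hh] at hc
    have h2 : ((1 : Fin 2), s) = (0, s') := Option.some_injective _ hc
    have h3 : (1 : Fin 2) = 0 := congrArg Prod.fst h2
    exact absurd h3 (by decide)
  have hBσ : 0 < 0 → ∀ s', L[(0 - 1)]? ≠ some ((0 : Fin 2), s') := by omega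
  have hAτ : ∀ s', L[n]? ≠ some ((1 : Fin 2), s') := by
    intro s' hc; exact absurd ((List.getElem?_eq_some_iff.mp hc).fst) (by omega)
  have hBτ : 0 < n → ∀ s', L[(n - 1)]? ≠ some ((1 : Fin 2), s') := by
    intro _ s' hc
    rw [hl] at hc
    have h2 : ((0 : Fin 2), t) = (1, s') := Option.some_injective _ hc
    have h3 : (0 : Fin 2) = 1 := congrArg Prod.fst h2
    exact absurd h3 (by decide)
  obtain ⟨σ, hσ⟩ := exists_perm_extend (pfun L 0 0) (pfun_inj hNC hAσ hBσ)
  obtain ⟨τ, hτ⟩ := exists_perm_extend (pfun L 1 n) (pfun_inj hNC hAτ hBτ)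
  set φ : FreeGroup (Fin 2) →* Equiv.Perm (Fin (n + 1)) :=
    FreeGroup.lift (fun i => if i = 0 then σ else τ) with hφ
  have hφ0 : φ (FreeGroup.of 0) = σ := by simp [hφ]
  have hφ1 : φ (FreeGroup.of 1) = τ := by simp [hφ]
  -- the path computation
  have path : ∀ d j (hj : j + d = n),
      φ (FreeGroup.mk (L.drop j)) ⟨n, by omega⟩ = ⟨j, by omega⟩ := by
    intro d
    induction d with
    | zero =>
      intro j hj
      have : L.drop j = [] := List.drop_eq_nil_of_le (by omega)
      rw [this, show FreeGroup.mk ([] : List (Fin 2 × Bool)) = 1 from rfl, _root_.map_one,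
        Equiv.Perm.one_apply]
      have hjn : j = n := by omega
      subst hjn
      rfl
    | succ d ih =>
      intro j hj
      have hjn : j < n := by omega
      have hdrop : L.drop j = L.get ⟨j, hjn⟩ :: L.drop (j + 1) := List.drop_eq_getElem_cons hjn
      rcases hq : L.get ⟨j, hjn⟩ with ⟨x, b⟩
      have hgj : L[j]? = some (x, b) := (List.getElem?_eq_getElem hjn).trans (congrArg some hq)
      have hsplit : FreeGroup.mk (L.drop j) =
          FreeGroup.mk [(x, b)] * FreeGroup.mk (L.drop (j + 1)) := by
        rw [FreeGroup.mul_mk, hdrop, hq]; rfl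
      have ihj : φ (FreeGroup.mk (L.drop (j + 1))) ⟨n, by omega⟩ = ⟨j + 1, by omega⟩ :=
        ih (j + 1) (by omega)
      rw [hsplit, _root_.map_mul]
      have : (φ (FreeGroup.mk [(x, b)]) * φ (FreeGroup.mk (L.drop (j + 1)))) ⟨n, by omega⟩
          = φ (FreeGroup.mk [(x, b)]) (φ (FreeGroup.mk (L.drop (j + 1))) ⟨n, by omega⟩) := rfl
      rw [this, ihj]
      have hx2 : x = 0 ∨ x = 1 := by omega
      cases b with
      | true =>
        have hofeq : FreeGroup.mk [(x, true)] = FreeGroup.of x := rfl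
        rw [hofeq]
        rcases hx2 with rfl | rfl
        · rw [hφ0]; exact hσ _ _ (pfun_true hNC hgj (by omega) (by omega))
        · rw [hφ1]; exact hτ _ _ (pfun_true hNC hgj (by omega) (by omega))
      | false =>
        have hofeq : FreeGroup.mk [(x, false)] = (FreeGroup.of x)⁻¹ := (inv_of_eq_mk x).symm
        rw [hofeq, _root_.map_inv]
        rcases hx2 with rfl | rfl
        · rw [hφ0]
          have h5 := hσ _ _ (pfun_false hjn hgj (by omega) (by omega))
          rw [← h5]; simp
        · rw [hφ1]
          have h5 := hτ _ _ (pfun_false hjn hgj (by omega) (by omega))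
          rw [← h5]; simp
  -- the stabilizer of vertex 0
  intro hmem
  have hv0 : (0 : ℕ) < n + 1 := by omega
  set v0 : Fin (n + 1) := ⟨0, hv0⟩ with hv0def
  set vn : Fin (n + 1) := ⟨n, by omega⟩ with hvndef
  have hwv : φ w vn = v0 := by
    have h0 := path n 0 (by omega)
    rw [List.drop_zero] at h0
    rw [show FreeGroup.mk L = w from FreeGroup.mk_toWord] at h0
    exact h0
  -- the stabilizer subgroup of v0
  let K : Subgroup (FreeGroup (Fin 2)) :=
    { carrier := {g | φ g v0 = v0}
      one_mem' := by simp
      mul_mem' := by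
        intro x y hx hy
        show φ (x * y) v0 = v0
        rw [_root_.map_mul]
        show φ x (φ y v0) = v0
        rw [hy, hx]
      inv_mem' := by
        intro x hx
        show φ x⁻¹ v0 = v0
        rw [_root_.map_inv]
        exact (Equiv.Perm.inv_eq_iff_eq).mpr hx.symm }
  have hKa : FreeGroup.of 0 ∈ K := by
    show φ (FreeGroup.of 0) v0 = v0
    rw [hφ0]
    exact hσ _ _ (pfun_loop hAσ hBσ hv0)
  have hτloop : τ vn = vn := hτ _ _ (pfun_loop hAτ hBτ (by omega))
  have hKc : w * FreeGroup.of 1 * w⁻¹ ∈ K := by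
    show φ (w * FreeGroup.of 1 * w⁻¹) v0 = v0
    rw [_root_.map_mul, _root_.map_mul, _root_.map_inv, hφ1]
    show φ w (τ ((φ w)⁻¹ v0)) = v0
    have hinv : (φ w)⁻¹ v0 = vn := (Equiv.Perm.inv_eq_iff_eq).mpr hwv.symm
    rw [hinv, hτloop, hwv]
  have hsub : Subgroup.closure {FreeGroup.of 0, w * FreeGroup.of 1 * w⁻¹} ≤ K := by
    rw [Subgroup.closure_le]
    rintro z (rfl | rfl)
    · exact hKa
    · exact hKc
  have hb : φ (FreeGroup.of 1) v0 = v0 := hsub hmem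
  rw [hφ1] at hb
  -- contradiction : τ moves v0
  cases s with
  | false =>
    have h6 : τ v0 = ⟨1, by omega⟩ := hτ _ _ (pfun_false hn hh hv0 (by omega))
    have h7 : v0 = ⟨1, by omega⟩ := hb.symm.trans h6
    simpa [v0] using congrArg Fin.val h7
  | true =>
    have h6 : τ ⟨1, by omega⟩ = v0 := hτ _ _ (pfun_true hNC hh (by omega) hv0)
    have h7 : v0 = ⟨1, by omega⟩ := τ.injective (hb.trans h6.symm)
    simpa [v0] using congrArg Fin.val h7

lemma closure_conj_zpow {G : Type*} [Group G] (x y : G) (e : ℤ) :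
    Subgroup.closure {x, x ^ e * y * x ^ (-e)} = Subgroup.closure {x, y} := by
  have hx1 : x ∈ Subgroup.closure {x, y} := Subgroup.subset_closure (Set.mem_insert _ _)
  have hy1 : y ∈ Subgroup.closure {x, y} := Subgroup.subset_closure (Set.mem_insert_of_mem _ rfl)
  have hx2 : x ∈ Subgroup.closure {x, x ^ e * y * x ^ (-e)} :=
    Subgroup.subset_closure (Set.mem_insert _ _)
  have hc2 : x ^ e * y * x ^ (-e) ∈ Subgroup.closure {x, x ^ e * y * x ^ (-e)} :=
    Subgroup.subset_closure (Set.mem_insert_of_mem _ rfl)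
  apply le_antisymm <;> rw [Subgroup.closure_le] <;> intro z hz <;>
    rcases hz with rfl | rfl
  · exact hx1
  · exact Subgroup.mul_mem _ (Subgroup.mul_mem _ (Subgroup.zpow_mem _ hx1 e) hy1)
      (Subgroup.zpow_mem _ hx1 (-e))
  · exact hx2
  · have hm : x ^ (-e) * (x ^ e * z * x ^ (-e)) * x ^ e ∈
        Subgroup.closure {x, x ^ e * z * x ^ (-e)} :=
      Subgroup.mul_mem _ (Subgroup.mul_mem _ (Subgroup.zpow_mem _ hx2 (-e)) hc2)
        (Subgroup.zpow_mem _ hx2 e)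
    have heq : x ^ (-e) * (x ^ e * z * x ^ (-e)) * x ^ e = z := by group
    rw [heq] at hm
    exact hm

lemma mk_single_eq_zpow (x : Fin 2) (b : Bool) :
    FreeGroup.mk [(x, b)] = FreeGroup.of x ^ (if b then (1 : ℤ) else -1) := by
  cases b
  · simp [inv_of_eq_mk]
  · simp [show FreeGroup.mk [(x, true)] = FreeGroup.of x from rfl]

lemma main_lemma : ∀ (k : ℕ) (w : FreeGroup (Fin 2)), w.toWord.length ≤ k →
    Subgroup.closure {FreeGroup.of 0, w * FreeGroup.of 1 * w⁻¹} = ⊤ →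
    ∃ m n : ℤ, w = FreeGroup.of 0 ^ m * FreeGroup.of 1 ^ n := by
  intro k
  induction k with
  | zero =>
    intro w hlen _
    have : w = 1 := FreeGroup.toWord_eq_nil_iff.mp (List.length_eq_zero_iff.mp (by omega))
    exact ⟨0, 0, by simp [this]⟩
  | succ k ih =>
    intro w hlen hcl
    rcases Nat.eq_zero_or_pos w.toWord.length with h0 | hpos
    · have : w = 1 := FreeGroup.toWord_eq_nil_iff.mp (List.length_eq_zero_iff.mp h0)
      exact ⟨0, 0, by simp [this]⟩
    set L := w.toWord with hL
    have hNC : NoCancel L := noCancel_toWord w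
    have hw : FreeGroup.mk L = w := FreeGroup.mk_toWord
    obtain ⟨⟨x0, s0⟩, hh⟩ : ∃ p, L[0]? = some p :=
      ⟨L.get ⟨0, hpos⟩, List.getElem?_eq_getElem hpos⟩
    obtain ⟨⟨xl, sl⟩, hl⟩ : ∃ p, L[(L.length - 1)]? = some p :=
      ⟨L.get ⟨L.length - 1, by omega⟩, List.getElem?_eq_getElem (by omega)⟩
    have hx0 : x0 = 0 ∨ x0 = 1 := by omega
    have hxl : xl = 0 ∨ xl = 1 := by omega
    rcases hx0 with rfl | rfl
    · -- strip first letter (an α-letter)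
      set L' := L.tail with hL'
      have hLsplit : L = (0, s0) :: L' := by
        cases hLc : L with
        | nil => rw [hLc] at hh; cases hh
        | cons p t =>
          rw [hLc] at hh
          cases hh
          simp [hL', hLc]
      have hNC' : NoCancel L' := by rw [hLsplit] at hNC; exact noCancel_tail hNC
      set w' := FreeGroup.mk L' with hw'
      have htw' : w'.toWord = L' := toWord_mk_of_noCancel hNC'
      have hlen' : w'.toWord.length ≤ k := by
        rw [htw']
        have : L.length = L'.length + 1 := by rw [hLsplit]; rfl
        omega
      have hsplit : w = FreeGroup.mk [(0, s0)] * w' := by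
        rw [hw', FreeGroup.mul_mk, List.singleton_append, ← hLsplit, hw]
      set e : ℤ := if s0 then 1 else -1 with he
      have hzp : FreeGroup.mk [((0 : Fin 2), s0)] = FreeGroup.of 0 ^ e := mk_single_eq_zpow 0 s0
      have hconj : w * FreeGroup.of 1 * w⁻¹ =
          FreeGroup.of 0 ^ e * (w' * FreeGroup.of 1 * w'⁻¹) * FreeGroup.of 0 ^ (-e) := by
        rw [hsplit, hzp]; group
      rw [hconj, closure_conj_zpow] at hcl
      obtain ⟨m, n, hmn⟩ := ih w' hlen' hcl
      exact ⟨e + m, n, by rw [hsplit, hzp, hmn, zpow_add]; group⟩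
    · rcases hxl with rfl | rfl
      · -- first letter β, last letter α : key lemma gives a contradiction
        exfalso
        have := key_lemma w s0 sl hh hl
        rw [hcl] at this
        exact this (Subgroup.mem_top _)
      · -- strip last letter (a β-letter)
        set L' := L.take (L.length - 1) with hL'
        have hdrop : L.drop (L.length - 1) = [(1, sl)] := by
          rw [List.drop_eq_getElem_cons (show L.length - 1 < L.length by omega)]
          have h1 : L[L.length - 1] = (1, sl) :=
            Option.some_injective _ ((List.getElem?_eq_getElem _).symm.trans hl)
          rw [h1, List.drop_eq_nil_of_le (by omega)]
        have hLsplit : L = L' ++ [(1, sl)] := by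
          rw [hL', ← hdrop, List.take_append_drop]
        have hNC' : NoCancel L' := noCancel_take hNC _
        set w' := FreeGroup.mk L' with hw'
        have htw' : w'.toWord = L' := toWord_mk_of_noCancel hNC'
        have hlen' : w'.toWord.length ≤ k := by
          rw [htw', hL']
          simp only [List.length_take]
          omega
        have hsplit : w = w' * FreeGroup.mk [(1, sl)] := by
          rw [hw', FreeGroup.mul_mk, ← hLsplit, hw]
        set e : ℤ := if sl then 1 else -1 with he
        have hzp : FreeGroup.mk [((1 : Fin 2), sl)] = FreeGroup.of 1 ^ e := mk_single_eq_zpow 1 sl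
        have hconj : w * FreeGroup.of 1 * w⁻¹ = w' * FreeGroup.of 1 * w'⁻¹ := by
          rw [hsplit, hzp]; group
        rw [hconj] at hcl
        obtain ⟨m, n, hmn⟩ := ih w' hlen' hcl
        exact ⟨m, n + e, by rw [hsplit, hzp, hmn, zpow_add]; group⟩

lemma main_lemma' (w : FreeGroup (Fin 2))
    (hcl : Subgroup.closure {FreeGroup.of 1, w * FreeGroup.of 0 * w⁻¹} = ⊤) :
    ∃ m n : ℤ, w = FreeGroup.of 1 ^ m * FreeGroup.of 0 ^ n := by
  set ψ : FreeGroup (Fin 2) ≃* FreeGroup (Fin 2) :=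
    FreeGroup.freeGroupCongr (Equiv.swap (0 : Fin 2) 1) with hψ
  have hψ0 : ψ (FreeGroup.of 0) = FreeGroup.of 1 := by
    simp [hψ, FreeGroup.freeGroupCongr_apply]
  have hψ1 : ψ (FreeGroup.of 1) = FreeGroup.of 0 := by
    simp [hψ, FreeGroup.freeGroupCongr_apply]
  have hmap := congrArg (Subgroup.map ψ.toMonoidHom) hcl
  rw [MonoidHom.map_closure, Set.image_pair,
    Subgroup.map_top_of_surjective ψ.toMonoidHom ψ.surjective] at hmap
  have h1 : ψ.toMonoidHom (FreeGroup.of 1) = FreeGroup.of 0 := hψ1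
  have h2 : ψ.toMonoidHom (w * FreeGroup.of 0 * w⁻¹) =
      ψ w * FreeGroup.of 1 * (ψ w)⁻¹ := by
    simp only [_root_.map_mul, _root_.map_inv]
    rw [show ψ.toMonoidHom (FreeGroup.of 0) = FreeGroup.of 1 from hψ0]
    rfl
  rw [h1, h2] at hmap
  obtain ⟨m, n, hmn⟩ := main_lemma ((ψ w).toWord.length) (ψ w) le_rfl hmap
  refine ⟨m, n, ?_⟩
  have := congrArg ψ.symm hmn
  rw [MulEquiv.symm_apply_apply] at this
  rw [this, _root_.map_mul, map_zpow, map_zpow]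
  rw [show ψ.symm (FreeGroup.of 0) = FreeGroup.of 1 by
      simp [hψ, FreeGroup.freeGroupCongr_symm, FreeGroup.freeGroupCongr_apply],
    show ψ.symm (FreeGroup.of 1) = FreeGroup.of 0 by
      simp [hψ, FreeGroup.freeGroupCongr_symm, FreeGroup.freeGroupCongr_apply]]

lemma not_both_conj (x : Fin 2) (α' β' : FreeGroup (Fin 2))
    (h1 : IsConj (FreeGroup.of x) α') (h2 : IsConj (FreeGroup.of x) β') :
    Subgroup.closure {α', β'} ≠ ⊤ := by
  intro hcl
  obtain ⟨y, hy⟩ : ∃ y : Fin 2, y ≠ x := ⟨if x = 0 then 1 else 0, by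
    rcases (show x = 0 ∨ x = 1 by omega) with rfl | rfl <;> decide⟩
  set f : FreeGroup (Fin 2) →* Multiplicative (ℤ × ℤ) :=
    FreeGroup.lift (fun i => Multiplicative.ofAdd (if i = x then ((1, 0) : ℤ × ℤ) else (0, 1)))
    with hf
  have hfx : f (FreeGroup.of x) = Multiplicative.ofAdd ((1, 0) : ℤ × ℤ) := by simp [hf]
  have hfy : f (FreeGroup.of y) = Multiplicative.ofAdd ((0, 1) : ℤ × ℤ) := by simp [hf, hy]
  have hα : f α' = Multiplicative.ofAdd ((1, 0) : ℤ × ℤ) := by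
    rw [← hfx]; exact isConj_iff_eq.mp (f.map_isConj h1).symm
  have hβ : f β' = Multiplicative.ofAdd ((1, 0) : ℤ × ℤ) := by
    rw [← hfx]; exact isConj_iff_eq.mp (f.map_isConj h2).symm
  have hmem : FreeGroup.of y ∈ Subgroup.closure {α', β'} := hcl ▸ Subgroup.mem_top _
  have hmem2 : f (FreeGroup.of y) ∈ Subgroup.map f (Subgroup.closure {α', β'}) :=
    Subgroup.mem_map_of_mem _ hmem
  rw [MonoidHom.map_closure, Set.image_pair, hα, hβ, Set.pair_eq_singleton] at hmem2
  rw [hfy] at hmem2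
  obtain ⟨n, hn⟩ := Subgroup.mem_closure_singleton.mp hmem2
  have hadd : (n • ((1, 0) : ℤ × ℤ)) = ((0, 1) : ℤ × ℤ) := by
    have := congrArg Multiplicative.toAdd hn
    simpa using this
  have hsnd := congrArg Prod.snd hadd
  simp at hsnd

/-- Let `G` be the free group on two generators `α`, `β`.  If `α', β' ∈ G`
generate `G` and each of them is conjugate to `α` or to `β`, then the pair
`(α', β')` is weakly Hurwitz equivalent to `(α, β)`: some global conjugate of
`(α', β')` is obtained from `(α, β)` by a finite sequence of Hurwitz moves and
their inverses. -/
theorem free_group_pair_weakly_equivalent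
    (α' β' : FreeGroup (Fin 2))
    (hgen : Subgroup.closure {α', β'} = (⊤ : Subgroup (FreeGroup (Fin 2))))
    (hα : IsConj (FreeGroup.of 0) α' ∨ IsConj (FreeGroup.of 1) α')
    (hβ : IsConj (FreeGroup.of 0) β' ∨ IsConj (FreeGroup.of 1) β') :
    ∃ g : FreeGroup (Fin 2),
      Relation.ReflTransGen hurwitzStep
        (FreeGroup.of 0, FreeGroup.of 1) (g⁻¹ * α' * g, g⁻¹ * β' * g) := by
  rcases hα with h1 | h1 <;> rcases hβ with h2 | h2
  · exact absurd hgen (not_both_conj 0 α' β' h1 h2)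
  · -- α' ~ α, β' ~ β
    obtain ⟨u, hu⟩ := isConj_iff.mp h1
    obtain ⟨v, hv⟩ := isConj_iff.mp h2
    have hmap := congrArg (Subgroup.map (MulAut.conj u⁻¹).toMonoidHom) hgen
    rw [MonoidHom.map_closure, Set.image_pair,
      Subgroup.map_top_of_surjective _ (MulAut.conj u⁻¹).surjective] at hmap
    have he1 : (MulAut.conj u⁻¹).toMonoidHom α' = FreeGroup.of 0 := by
      rw [← hu]; simp [MulAut.conj_apply]; group
    have he2 : (MulAut.conj u⁻¹).toMonoidHom β' =
        (u⁻¹ * v) * FreeGroup.of 1 * (u⁻¹ * v)⁻¹ := by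
      rw [← hv]; simp [MulAut.conj_apply]; group
    rw [he1, he2] at hmap
    obtain ⟨m, n, hw⟩ := main_lemma _ (u⁻¹ * v) le_rfl hmap
    have hv2 : v = u * (FreeGroup.of 0 ^ m * FreeGroup.of 1 ^ n) := by
      rw [← hw]; group
    refine ⟨u * FreeGroup.of 0 ^ m, ?_⟩
    have e1 : (u * FreeGroup.of 0 ^ m)⁻¹ * α' * (u * FreeGroup.of 0 ^ m) =
        FreeGroup.of 0 := by rw [← hu]; group
    have e2 : (u * FreeGroup.of 0 ^ m)⁻¹ * β' * (u * FreeGroup.of 0 ^ m) =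
        FreeGroup.of 1 := by rw [← hv, hv2]; group
    rw [e1, e2]
  · -- α' ~ β, β' ~ α
    obtain ⟨u, hu⟩ := isConj_iff.mp h1
    obtain ⟨v, hv⟩ := isConj_iff.mp h2
    have hmap := congrArg (Subgroup.map (MulAut.conj u⁻¹).toMonoidHom) hgen
    rw [MonoidHom.map_closure, Set.image_pair,
      Subgroup.map_top_of_surjective _ (MulAut.conj u⁻¹).surjective] at hmap
    have he1 : (MulAut.conj u⁻¹).toMonoidHom α' = FreeGroup.of 1 := by
      rw [← hu]; simp [MulAut.conj_apply]; group
    have he2 : (MulAut.conj u⁻¹).toMonoidHom β' =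
        (u⁻¹ * v) * FreeGroup.of 0 * (u⁻¹ * v)⁻¹ := by
      rw [← hv]; simp [MulAut.conj_apply]; group
    rw [he1, he2] at hmap
    obtain ⟨m, n, hw⟩ := main_lemma' (u⁻¹ * v) hmap
    have hv2 : v = u * (FreeGroup.of 1 ^ m * FreeGroup.of 0 ^ n) := by
      rw [← hw]; group
    refine ⟨u * FreeGroup.of 1 ^ m * FreeGroup.of 1, ?_⟩
    have e1 : (u * FreeGroup.of 1 ^ m * FreeGroup.of 1)⁻¹ * α' *
        (u * FreeGroup.of 1 ^ m * FreeGroup.of 1) = FreeGroup.of 1 := by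
      rw [← hu]; group
    have e2 : (u * FreeGroup.of 1 ^ m * FreeGroup.of 1)⁻¹ * β' *
        (u * FreeGroup.of 1 ^ m * FreeGroup.of 1) =
        (FreeGroup.of 1)⁻¹ * FreeGroup.of 0 * FreeGroup.of 1 := by
      rw [← hv, hv2]; group
    rw [e1, e2]
    refine Relation.ReflTransGen.single (Or.inr ?_)
    unfold hurwitz
    refine Prod.ext ?_ ?_ <;> simp <;> group
  · exact absurd hgen (not_both_conj 1 α' β' h1 h2)
end

section
/- In SL(2,ℤ), if an element g is a product of two Dehn twists (elements conjugate to R = [[1,0],[-1,1]], acting on row vectors from the right), then 2 − trace(g) is a perfect square. -/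
/-- The standard negative Dehn twist matrix `R = [[1,0],[-1,1]]`. -/
def Rmat : SL2Z := ⟨!![1, 0; -1, 1], by simp [Matrix.det_fin_two_of]⟩

/-- A Dehn twist in `SL(2,ℤ)` is a conjugate of `R`. -/
def IsDehnTwist (t : SL2Z) : Prop := IsConj Rmat t

lemma aux_trace (u : SL2Z) :
    2 - Matrix.trace ((Rmat * u * Rmat * u⁻¹ : SL2Z) : Matrix (Fin 2) (Fin 2) ℤ)
      = ((u : Matrix (Fin 2) (Fin 2) ℤ) 0 1) ^ 2 := by
  have hd : Matrix.det (u : Matrix (Fin 2) (Fin 2) ℤ) = 1 := u.prop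
  rw [Matrix.det_fin_two] at hd
  simp only [Matrix.SpecialLinearGroup.coe_mul]
  simp [Matrix.trace_fin_two, Matrix.SpecialLinearGroup.coe_inv,
    Matrix.adjugate_fin_two, Matrix.mul_apply, Matrix.vecMul, dotProduct,
    Fin.sum_univ_two, Rmat]
  linear_combination (-2 : ℤ) * hd

/-- If `g ∈ SL(2,ℤ)` is a product of two Dehn twists, then `2 - trace g` is a
perfect square. -/
theorem trace_of_product_of_two_dehn_twists (g : SL2Z)
    (h : ∃ t₁ t₂ : SL2Z, IsDehnTwist t₁ ∧ IsDehnTwist t₂ ∧ g = t₁ * t₂) :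
    ∃ q : ℤ, 2 - Matrix.trace (g : Matrix (Fin 2) (Fin 2) ℤ) = q ^ 2 := by
  obtain ⟨t₁, t₂, ⟨c₁, h₁⟩, ⟨c₂, h₂⟩, rfl⟩ := h
  set a : SL2Z := (c₁ : SL2Z) with ha
  set b : SL2Z := (c₂ : SL2Z) with hb
  have ht₁ : t₁ = a * Rmat * a⁻¹ := eq_mul_inv_of_mul_eq h₁.symm
  have ht₂ : t₂ = b * Rmat * b⁻¹ := eq_mul_inv_of_mul_eq h₂.symm
  set u : SL2Z := a⁻¹ * b with hu
  have hg : t₁ * t₂ = a * (Rmat * u * Rmat * u⁻¹) * a⁻¹ := by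
    rw [ht₁, ht₂, hu]; group
  rw [hg]
  have hs : (a * (Rmat * u * Rmat * u⁻¹) * a⁻¹ : SL2Z)
      = a * ((Rmat * u * Rmat * u⁻¹) * a⁻¹) := by group
  have hs2 : ((Rmat * u * Rmat * u⁻¹) * a⁻¹ * a : SL2Z) = Rmat * u * Rmat * u⁻¹ := by
    group
  have htr : Matrix.trace ((a * (Rmat * u * Rmat * u⁻¹) * a⁻¹ : SL2Z) : Matrix (Fin 2) (Fin 2) ℤ)
      = Matrix.trace ((Rmat * u * Rmat * u⁻¹ : SL2Z) : Matrix (Fin 2) (Fin 2) ℤ) := by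
    rw [hs, Matrix.SpecialLinearGroup.coe_mul, Matrix.trace_mul_comm,
      ← Matrix.SpecialLinearGroup.coe_mul, hs2]
  rw [htr]
  exact ⟨(u : Matrix (Fin 2) (Fin 2) ℤ) 0 1, aux_trace u⟩
end
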